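/- If κ is C^(n)-superstrong (witnessed by j : V → M), then κ ∈ C^(n). -/

import Mathlib

/-!  Common framework: the language of set theory, Lévy hierarchy,
Σₙ-elementarity of classes of `ZFSet`s, cumulative hierarchy, etc. -/

open FirstOrder

/-- The language of set theory: a single binary relation symbol (membership). -/
def LSet : FirstOrder.Language where
  Functions _ := Empty
  Relations n := match n with
    | 2 => Unit
    | _ => Empty

/-- `V` (the universe of ZFC sets) as an `LSet`-structure. -/
noncomputable instance : LSet.Structure ZFSet where
  funMap := fun f _ => f.elim
  RelMap := fun {n} r xs => match n, r, xs with
    | 2, _, xs => xs 0 ∈ xs 1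
    | 0, r, _ => r.elim
    | 1, r, _ => r.elim
    | _+3, r, _ => r.elim

/-- Any class of sets as an `LSet`-structure, with the inherited membership relation. -/
noncomputable instance (S : Set ZFSet) : LSet.Structure S where
  funMap := fun f _ => f.elim
  RelMap := fun {n} r xs => match n, r, xs with
    | 2, _, xs => (xs 0 : ZFSet) ∈ (xs 1 : ZFSet)
    | 0, r, _ => r.elim
    | 1, r, _ => r.elim
    | _+3, r, _ => r.elim

mutual
  /-- The Σₙ formulas of the Lévy-style prenex hierarchy. -/
  inductive IsSigmaFml : ℕ → ∀ {k : ℕ}, LSet.BoundedFormula Empty k → Prop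
    | of_qf {k} {φ : LSet.BoundedFormula Empty k} : φ.IsQF → IsSigmaFml 0 φ
    | of_pi {n k} {φ : LSet.BoundedFormula Empty k} : IsPiFml n φ → IsSigmaFml (n+1) φ
    | ex {n k} {φ : LSet.BoundedFormula Empty (k+1)} :
        IsSigmaFml (n+1) φ → IsSigmaFml (n+1) φ.ex
  /-- The Πₙ formulas of the Lévy-style prenex hierarchy. -/
  inductive IsPiFml : ℕ → ∀ {k : ℕ}, LSet.BoundedFormula Empty k → Prop
    | of_qf {k} {φ : LSet.BoundedFormula Empty k} : φ.IsQF → IsPiFml 0 φ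
    | of_sigma {n k} {φ : LSet.BoundedFormula Empty k} : IsSigmaFml n φ → IsPiFml (n+1) φ
    | all {n k} {φ : LSet.BoundedFormula Empty (k+1)} :
        IsPiFml (n+1) φ → IsPiFml (n+1) φ.all
end

/-- Satisfaction of a formula (with `k` parameters) in `V`. -/
def SatV {k : ℕ} (φ : LSet.BoundedFormula Empty k) (xs : Fin k → ZFSet) : Prop :=
  φ.Realize (fun e => e.elim) xs

/-- Satisfaction of a formula (with `k` parameters) in a class `S` of sets. -/
def SatIn (S : Set ZFSet) {k : ℕ} (φ : LSet.BoundedFormula Empty k) (xs : Fin k → S) : Prop :=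
  φ.Realize (fun e => e.elim) xs

/-- `S ≼ₙ V` : Σₙ formulas with parameters in `S` are absolute between `S` and `V`. -/
def SigmaElementary (n : ℕ) (S : Set ZFSet) : Prop :=
  ∀ {k : ℕ} (φ : LSet.BoundedFormula Empty k), IsSigmaFml n φ →
    ∀ xs : Fin k → S, (SatIn S φ xs ↔ SatV φ (fun i => (xs i : ZFSet)))

/-- The cumulative hierarchy `V_α`, as the class of sets of rank `< α`. -/
def Vset (α : Ordinal) : Set ZFSet := {x | x.rank < α}

universe u

/-- `H_κ`: the class of sets hereditarily of cardinality `< κ`. -/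
def Hset (κ : Cardinal.{u}) : Set ZFSet.{u} :=
  {x | ∃ t : ZFSet, t.IsTransitive ∧ x ⊆ t ∧ Cardinal.mk t.toSet < Cardinal.lift.{u+1} κ}

/-- The class `C⁽ⁿ⁾ = {α : V_α ≼ₙ V}`. -/
def Cclass (n : ℕ) : Set Ordinal := {α | SigmaElementary n (Vset α)}

/-- `x` is a (von Neumann) ordinal: a transitive set of transitive sets. -/
def ZFOrd (x : ZFSet) : Prop := x.IsTransitive ∧ ∀ y ∈ x, ZFSet.IsTransitive y

/-- A transitive class of sets. -/
def TransClass (M : Set ZFSet) : Prop := ∀ x ∈ M, ∀ y, y ∈ x → y ∈ M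

/-- `j` is an elementary embedding of `V` into the class `M`. -/
structure ElemEmbV (M : Set ZFSet) (j : ZFSet → ZFSet) : Prop where
  maps : ∀ x, j x ∈ M
  elem : ∀ {k : ℕ} (φ : LSet.BoundedFormula Empty k) (xs : Fin k → ZFSet),
    SatV φ xs ↔ SatIn M φ (fun i => ⟨j (xs i), maps (xs i)⟩)

/-- `j` is an elementary embedding of the class `S` into the class `T`. -/
structure ElemEmbBetween (S T : Set ZFSet) (j : ZFSet → ZFSet) : Prop where
  maps : ∀ x ∈ S, j x ∈ T
  elem : ∀ {k : ℕ} (φ : LSet.BoundedFormula Empty k) (xs : Fin k → ZFSet) (h : ∀ i, xs i ∈ S),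
    SatIn S φ (fun i => ⟨xs i, h i⟩) ↔ SatIn T φ (fun i => ⟨j (xs i), maps _ (h i)⟩)

/-- `κ` is the critical point of `j`: `j` fixes all ordinals `< κ` and moves `κ`. -/
def IsCritPt (j : ZFSet → ZFSet) (κ : ZFSet) : Prop :=
  ZFOrd κ ∧ (∀ x, x ∈ κ → j x = x) ∧ j κ ≠ κ

/-- An ultrafilter on (all subsets of) the set `base`. -/
structure ZFUltra (base : ZFSet) where
  sets : Set ZFSet
  sub : ∀ X ∈ sets, X ⊆ base
  base_mem : base ∈ sets
  empty_not_mem : (∅ : ZFSet) ∉ sets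
  upward : ∀ X ∈ sets, ∀ Y, Y ⊆ base → X ⊆ Y → Y ∈ sets
  ultra : ∀ X, X ⊆ base → (X ∈ sets ∨ ZFSet.sep (fun y => y ∉ X) base ∈ sets)

/-- `κ`-completeness: any family of fewer than `|κ|` many members has its
intersection (with the base) in the ultrafilter. -/
def ZFUltra.Complete {b : ZFSet} (κ : ZFSet) (U : ZFUltra b) : Prop :=
  ∀ F : Set ZFSet, F ⊆ U.sets → Cardinal.mk F < Cardinal.mk κ.toSet →
    ZFSet.sep (fun x => ∀ X ∈ F, x ∈ X) b ∈ U.sets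

/-- Nonprincipality: the complement of every singleton is in the ultrafilter. -/
def ZFUltra.Nonprincipal {b : ZFSet} (U : ZFUltra b) : Prop :=
  ∀ x, ZFSet.sep (fun y => y ≠ x) b ∈ U.sets

/-- Normality for an ultrafilter on an ordinal `κ`: closure under diagonal
intersections. -/
def ZFUltra.NormalOn (κ : ZFSet) (U : ZFUltra κ) : Prop :=
  ∀ A : ZFSet → ZFSet, (∀ α ∈ κ, A α ∈ U.sets) →
    ZFSet.sep (fun α => ∀ β ∈ α, α ∈ A β) κ ∈ U.sets

/-- `P_κ(γ)`: the set of subsets of `γ` of cardinality `< |κ|`. -/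
noncomputable def Pkappa (κ γ : ZFSet) : ZFSet :=
  ZFSet.sep (fun x => Cardinal.mk x.toSet < Cardinal.mk κ.toSet) (ZFSet.powerset γ)

/-- Fineness for an ultrafilter on `P_κ(γ)`. -/
def ZFUltra.Fine (κ γ : ZFSet) (U : ZFUltra (Pkappa κ γ)) : Prop :=
  ∀ a ∈ γ, ZFSet.sep (fun x => a ∈ x) (Pkappa κ γ) ∈ U.sets

/-- Normality for an ultrafilter on `P_κ(γ)`: closure under diagonal intersections. -/
def ZFUltra.NormalP (κ γ : ZFSet) (U : ZFUltra (Pkappa κ γ)) : Prop :=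
  ∀ A : ZFSet → ZFSet, (∀ a ∈ γ, A a ∈ U.sets) →
    ZFSet.sep (fun x => ∀ a ∈ x, x ∈ A a) (Pkappa κ γ) ∈ U.sets

/-- `κ` is `γ`-supercompact: there is a `κ`-complete fine normal ultrafilter on `P_κ(γ)`. -/
def GammaSupercompact (κ γ : ZFSet) : Prop :=
  ∃ U : ZFUltra (Pkappa κ γ), U.Complete κ ∧ U.Fine κ γ ∧ U.NormalP κ γ

/-- `κ` is supercompact. -/
def Supercompact (κ : ZFSet) : Prop :=
  ZFOrd κ ∧ ∀ γ : ZFSet, ZFOrd γ → GammaSupercompact κ γ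

/-- `κ` is measurable: it carries a `κ`-complete nonprincipal ultrafilter. -/
def ZFMeasurable (κ : ZFSet) : Prop :=
  ZFOrd κ ∧ ∃ U : ZFUltra κ, U.Complete κ ∧ U.Nonprincipal

/-- `κ` is `λ`-strong. -/
def LambdaStrong (κ : ZFSet) (lam : Ordinal) : Prop :=
  ∃ (M : Set ZFSet) (j : ZFSet → ZFSet), TransClass M ∧ ElemEmbV M j ∧ IsCritPt j κ ∧
    lam < (j κ).rank ∧ (∀ x, x.rank < lam → x ∈ M)

/-- `κ` is `λ`-`C⁽ⁿ⁾`-strong. -/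
def LambdaCnStrong (n : ℕ) (κ : ZFSet) (lam : Ordinal) : Prop :=
  ∃ (M : Set ZFSet) (j : ZFSet → ZFSet), TransClass M ∧ ElemEmbV M j ∧ IsCritPt j κ ∧
    lam < (j κ).rank ∧ (∀ x, x.rank < lam → x ∈ M) ∧ (j κ).rank ∈ Cclass n

/-- `κ` is superstrong. -/
def Superstrong (κ : ZFSet) : Prop :=
  ∃ (M : Set ZFSet) (j : ZFSet → ZFSet), TransClass M ∧ ElemEmbV M j ∧ IsCritPt j κ ∧
    (∀ x, x.rank < (j κ).rank → x ∈ M)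

/-- `κ` is `C⁽ⁿ⁾`-superstrong. -/
def CnSuperstrong (n : ℕ) (κ : ZFSet) : Prop :=
  ∃ (M : Set ZFSet) (j : ZFSet → ZFSet), TransClass M ∧ ElemEmbV M j ∧ IsCritPt j κ ∧
    (∀ x, x.rank < (j κ).rank → x ∈ M) ∧ (j κ).rank ∈ Cclass n

/-- `κ` is `λ`-`C⁽ⁿ⁾`-extendible. -/
def LamCnExtendible (n : ℕ) (κ : ZFSet) (lam : Ordinal) : Prop :=
  ∃ (μ : Ordinal) (j : ZFSet → ZFSet), ElemEmbBetween (Vset lam) (Vset μ) j ∧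
    IsCritPt j κ ∧ lam < (j κ).rank ∧ (j κ).rank ∈ Cclass n

/-- `κ` is `C⁽ⁿ⁾`-extendible. -/
def CnExtendible (n : ℕ) (κ : ZFSet) : Prop :=
  ∀ lam : Ordinal, κ.rank < lam → LamCnExtendible n κ lam

/-- `κ` is extendible. -/
def Extendible (κ : ZFSet) : Prop :=
  ∀ lam : Ordinal, κ.rank < lam →
    ∃ (μ : Ordinal) (j : ZFSet → ZFSet), ElemEmbBetween (Vset lam) (Vset μ) j ∧
      IsCritPt j κ ∧ lam < (j κ).rank


/-! ### Auxiliary development for the proof -/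

open FirstOrder.Language FirstOrder.Language.BoundedFormula

section Machinery
universe v

/-- lift a variable index into an extended context -/
def vl {k : ℕ} (i : Fin k) : Fin (k+1) := i.castSucc

/-- the innermost bound variable -/
def bv (k : ℕ) : Fin (k+1) := Fin.last k

@[simp] theorem snoc_vl {α : Type v} {k} (xs : Fin k → α) (a : α) (i : Fin k) :
    Fin.snoc (α := fun _ => α) xs a (vl i) = xs i := by simp [vl]

@[simp] theorem snoc_bv {α : Type v} {k} (xs : Fin k → α) (a : α) :
    Fin.snoc (α := fun _ => α) xs a (bv k) = a := by simp [bv]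

def memF {k : ℕ} (i j : Fin k) : LSet.BoundedFormula Empty k :=
  FirstOrder.Language.Relations.boundedFormula₂ (L := LSet) () (&i) (&j)

def eqF {k : ℕ} (i j : Fin k) : LSet.BoundedFormula Empty k :=
  FirstOrder.Language.Term.bdEqual (&i) (&j)

/-- bounded universal quantifier: ∀ z ∈ var i, φ -/
def bAll {k : ℕ} (i : Fin k) (φ : LSet.BoundedFormula Empty (k+1)) : LSet.BoundedFormula Empty k :=
  ((memF (bv k) (vl i)).imp φ).all

/-- bounded existential quantifier: ∃ z ∈ var i, φ -/
def bEx {k : ℕ} (i : Fin k) (φ : LSet.BoundedFormula Empty (k+1)) : LSet.BoundedFormula Empty k :=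
  ((memF (bv k) (vl i)) ⊓ φ).ex

/-- subset formula : var i ⊆ var j -/
def subF {k : ℕ} (i j : Fin k) : LSet.BoundedFormula Empty k :=
  bAll i (memF (bv k) (vl j))

section RealizeLemmas
variable {α : Type v} [LSet.Structure α] {m : α → α → Prop}
  (hm : ∀ a b : α, FirstOrder.Language.Structure.RelMap (L := LSet) (n := 2) () ![a, b] ↔ m a b)

@[simp] theorem realize_eqF {k} (i j : Fin k) (v : Empty → α) (xs : Fin k → α) :
    (eqF i j).Realize v xs ↔ xs i = xs j := by simp [eqF]

include hm

theorem realize_memF {k} (i j : Fin k) (v : Empty → α) (xs : Fin k → α) :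
    (memF i j).Realize v xs ↔ m (xs i) (xs j) := by
  refine (BoundedFormula.realize_rel₂ (L := LSet) (R := ()) ).trans ?_
  simp [hm]

theorem realize_bAll {k} (i : Fin k) (φ : LSet.BoundedFormula Empty (k+1))
    (v : Empty → α) (xs : Fin k → α) :
    (bAll i φ).Realize v xs ↔ ∀ a, m a (xs i) → φ.Realize v (Fin.snoc xs a) := by
  simp [bAll, realize_memF hm]

theorem realize_bEx {k} (i : Fin k) (φ : LSet.BoundedFormula Empty (k+1))
    (v : Empty → α) (xs : Fin k → α) :
    (bEx i φ).Realize v xs ↔ ∃ a, m a (xs i) ∧ φ.Realize v (Fin.snoc xs a) := by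
  simp [bEx, realize_memF hm]

theorem realize_subF {k} (i j : Fin k) (v : Empty → α) (xs : Fin k → α) :
    (subF i j).Realize v xs ↔ ∀ a, m a (xs i) → m a (xs j) := by
  simp [subF, realize_bAll hm, realize_memF hm]

end RealizeLemmas

theorem hmV : ∀ a b : ZFSet.{v},
    FirstOrder.Language.Structure.RelMap (L := LSet) (n := 2) () ![a, b] ↔ a ∈ b := by
  intro a b
  show (![a,b] 0 ∈ ![a,b] 1) ↔ _
  simp

theorem hmS (S : Set ZFSet.{v}) : ∀ a b : S,
    FirstOrder.Language.Structure.RelMap (L := LSet) (n := 2) () ![a, b] ↔ (a : ZFSet) ∈ (b : ZFSet) := by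
  intro a b
  show ((![a,b] 0 : S) : ZFSet) ∈ (((![a,b] 1 : S)) : ZFSet) ↔ _
  simp

end Machinery

section OrdFacts
universe v
variable {a b x y : ZFSet.{v}}

theorem ZFOrd.mem (h : ZFOrd a) (hx : x ∈ a) : ZFOrd x :=
  ⟨h.2 x hx, fun y hy => h.2 y (h.1 x hx hy)⟩

theorem zford_tri : ∀ a b : ZFSet.{v}, ZFOrd a → ZFOrd b → a ∈ b ∨ a = b ∨ b ∈ a := by
  intro a
  induction a using ZFSet.inductionOn with
  | _ a IH1 =>
    intro b
    induction b using ZFSet.inductionOn with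
    | _ b IH2 =>
      intro ha hb
      by_cases h1 : a ∈ b
      · exact Or.inl h1
      by_cases h2 : b ∈ a
      · exact Or.inr (Or.inr h2)
      refine Or.inr (Or.inl (ZFSet.ext fun x => ⟨fun hx => ?_, fun hx => ?_⟩))
      · rcases IH1 x hx b (ha.mem hx) hb with h | h | h
        · exact h
        · exact absurd (h ▸ hx) h2
        · exact absurd (ha.1 x hx h) h2
      · rcases IH2 x hx ha (hb.mem hx) with h | h | h
        · exact absurd (hb.1 x hx h) h1
        · exact absurd (h ▸ hx) h1
        · exact h
end OrdFacts

section Vzsec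
universe v

noncomputable def Vz : Ordinal.{v} → ZFSet.{v}
  | α => ZFSet.sUnion (ZFSet.range fun i : α.ToType =>
      ZFSet.powerset (Vz ((Ordinal.ToType.mk (o := α)).symm i).1))
termination_by α => α
decreasing_by exact ((Ordinal.ToType.mk (o := _)).symm i).2

theorem mem_Vz_iff {α : Ordinal.{v}} {x : ZFSet.{v}} :
    x ∈ Vz α ↔ ∃ β < α, x ⊆ Vz β := by
  rw [Vz]
  simp only [ZFSet.mem_sUnion, ZFSet.mem_range, ZFSet.mem_powerset]
  constructor
  · rintro ⟨z, ⟨i, rfl⟩, h⟩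
    exact ⟨_, ((Ordinal.ToType.mk (o := α)).symm i).2, ZFSet.mem_powerset.1 h⟩
  · rintro ⟨β, hβ, h⟩
    refine ⟨_, ⟨Ordinal.ToType.mk (o := α) ⟨β, hβ⟩, rfl⟩, ZFSet.mem_powerset.2 ?_⟩
    rw [OrderIso.symm_apply_apply (Ordinal.ToType.mk (o := α)) ⟨β, hβ⟩]
    exact h

theorem mem_Vz {α : Ordinal.{v}} {x : ZFSet.{v}} : x ∈ Vz α ↔ x.rank < α := by
  induction α using Ordinal.induction generalizing x with
  | h α IH =>
    rw [mem_Vz_iff]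
    constructor
    · rintro ⟨β, hβ, hsub⟩
      exact lt_of_le_of_lt (ZFSet.rank_le_iff.2 fun y hy => (IH β hβ).1 (hsub hy)) hβ
    · intro h
      exact ⟨x.rank, h, fun y hy => (IH _ h).2 (ZFSet.rank_lt_of_mem hy)⟩

theorem subset_Vz {α : Ordinal.{v}} {x : ZFSet.{v}} : x ⊆ Vz α ↔ x.rank ≤ α := by
  rw [ZFSet.rank_le_iff]
  constructor
  · intro h y hy; exact mem_Vz.1 (h hy)
  · intro h y hy; exact mem_Vz.2 (h hy)

end Vzsec

section PairSec
universe v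

/-- first-order-matching characterization of Kuratowski pairs -/
def PairR {α : Type v} (m : α → α → Prop) (p a b : α) : Prop :=
  (∀ q, m q p → ∀ r, m r q → r = a ∨ r = b) ∧
  (∃ q, m q p ∧ m a q ∧ ∀ r, m r q → r = a) ∧
  (∃ q, m q p ∧ m a q ∧ m b q) ∧
  (∀ q, m q p → m a q)

def ApplyR {α : Type v} (m : α → α → Prop) (s g v : α) : Prop :=
  ∃ p, m p s ∧ PairR m p g v

theorem mem_zpair {p a b : ZFSet.{v}} : p ∈ ZFSet.pair a b ↔ p = {a} ∨ p = {a, b} := by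
  simp [ZFSet.pair, ZFSet.mem_pair]

theorem pairR_iff {p a b : ZFSet.{v}} : PairR (· ∈ ·) p a b ↔ p = ZFSet.pair a b := by
  constructor
  · rintro ⟨c1, ⟨q2, hq2, ha2, hu2⟩, ⟨q3, hq3, ha3, hb3⟩, c4⟩
    apply ZFSet.ext; intro q
    rw [mem_zpair]
    constructor
    · intro hq
      by_cases hb : b ∈ q
      · refine Or.inr (ZFSet.ext fun r => ⟨fun hr => ?_, fun hr => ?_⟩)
        · rw [ZFSet.mem_pair]; exact c1 q hq r hr
        · rcases ZFSet.mem_pair.1 hr with rfl | rfl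
          · exact c4 q hq
          · exact hb
      · refine Or.inl (ZFSet.ext fun r => ⟨fun hr => ?_, fun hr => ?_⟩)
        · rcases c1 q hq r hr with rfl | rfl
          · exact ZFSet.mem_singleton.2 rfl
          · exact absurd hr hb
        · rw [ZFSet.mem_singleton.1 hr]; exact c4 q hq
    · rintro (rfl | rfl)
      · have : q2 = {a} := ZFSet.ext fun r =>
          ⟨fun hr => ZFSet.mem_singleton.2 (hu2 r hr),
           fun hr => (ZFSet.mem_singleton.1 hr) ▸ ha2⟩
        exact this ▸ hq2
      · have : q3 = {a, b} := ZFSet.ext fun r =>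
          ⟨fun hr => ZFSet.mem_pair.2 (c1 q3 hq3 r hr),
           fun hr => by rcases ZFSet.mem_pair.1 hr with rfl | rfl; exacts [ha3, hb3]⟩
        exact this ▸ hq3
  · rintro rfl
    refine ⟨?_, ⟨{a}, ?_, ?_, ?_⟩, ⟨{a, b}, ?_, ?_, ?_⟩, ?_⟩
    · intro q hq r hr
      rcases mem_zpair.1 hq with rfl | rfl
      · exact Or.inl (ZFSet.mem_singleton.1 hr)
      · exact ZFSet.mem_pair.1 hr
    · exact mem_zpair.2 (Or.inl rfl)
    · exact ZFSet.mem_singleton.2 rfl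
    · intro r hr; exact ZFSet.mem_singleton.1 hr
    · exact mem_zpair.2 (Or.inr rfl)
    · exact ZFSet.mem_pair.2 (Or.inl rfl)
    · exact ZFSet.mem_pair.2 (Or.inr rfl)
    · intro q hq
      rcases mem_zpair.1 hq with rfl | rfl
      · exact ZFSet.mem_singleton.2 rfl
      · exact ZFSet.mem_pair.2 (Or.inl rfl)

/-- PairR over the subtype is the real PairR, given transitivity -/
theorem pairR_subtype {S : Set ZFSet.{v}} (hS : TransClass S) {p a b : S} :
    PairR (fun x y : S => (x : ZFSet) ∈ (y : ZFSet)) p a b ↔ PairR (· ∈ ·) (p : ZFSet) a b := by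
  constructor
  · rintro ⟨c1, ⟨q2, hq2, ha2, hu2⟩, ⟨q3, hq3, ha3, hb3⟩, c4⟩
    refine ⟨?_, ⟨q2, hq2, ha2, ?_⟩, ⟨q3, hq3, ha3, hb3⟩, ?_⟩
    · intro q hq r hr
      have hqS : q ∈ S := hS p p.2 q hq
      have hrS : r ∈ S := hS q hqS r hr
      rcases c1 ⟨q, hqS⟩ hq ⟨r, hrS⟩ hr with h | h
      · exact Or.inl (congrArg Subtype.val h)
      · exact Or.inr (congrArg Subtype.val h)
    · intro r hr
      have hq2S : (q2 : ZFSet) ∈ S := q2.2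
      have hrS : r ∈ S := hS q2 hq2S r hr
      exact congrArg Subtype.val (hu2 ⟨r, hrS⟩ hr)
    · intro q hq
      have hqS : q ∈ S := hS p p.2 q hq
      exact c4 ⟨q, hqS⟩ hq
  · rintro ⟨c1, ⟨q2, hq2, ha2, hu2⟩, ⟨q3, hq3, ha3, hb3⟩, c4⟩
    have hq2S : q2 ∈ S := hS p p.2 q2 hq2
    have hq3S : q3 ∈ S := hS p p.2 q3 hq3
    refine ⟨?_, ⟨⟨q2, hq2S⟩, hq2, ha2, ?_⟩, ⟨⟨q3, hq3S⟩, hq3, ha3, hb3⟩, ?_⟩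
    · intro q hq r hr
      rcases c1 q hq r hr with h | h
      · exact Or.inl (Subtype.ext h)
      · exact Or.inr (Subtype.ext h)
    · intro r hr; exact Subtype.ext (hu2 r hr)
    · intro q hq; exact c4 q hq

theorem applyR_subtype {S : Set ZFSet.{v}} (hS : TransClass S) {s g v : S} :
    ApplyR (fun x y : S => (x : ZFSet) ∈ (y : ZFSet)) s g v ↔ ApplyR (· ∈ ·) (s : ZFSet) g v := by
  constructor
  · rintro ⟨p, hp, hpair⟩
    exact ⟨p, hp, (pairR_subtype hS).1 hpair⟩
  · rintro ⟨p, hp, hpair⟩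
    have hpS : p ∈ S := hS s s.2 p hp
    exact ⟨⟨p, hpS⟩, hp, (pairR_subtype hS).2 hpair⟩

theorem applyR_real {s g v : ZFSet.{v}} :
    ApplyR (· ∈ ·) s g v ↔ ∃ p ∈ s, p = ZFSet.pair g v := by
  unfold ApplyR
  simp [pairR_iff]

end PairSec
section Formulas

/-- transitivity of var i -/
def transF {k : ℕ} (i : Fin k) : LSet.BoundedFormula Empty k :=
  bAll i (bAll (bv k) (memF (bv (k+1)) (vl (vl i))))

/-- var 0 is a von Neumann ordinal -/
def fOrd : LSet.BoundedFormula Empty 1 :=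
  transF 0 ⊓ bAll 0 (transF (bv 1))

/-- var 0 is the Kuratowski pair of var a, var b (generic positions) -/
def pairF {k : ℕ} (p a b : Fin k) : LSet.BoundedFormula Empty k :=
  (bAll p (bAll (bv k) ((eqF (bv (k+1)) (vl (vl a))) ⊔ (eqF (bv (k+1)) (vl (vl b)))))) ⊓
  ((bEx p ((memF (vl a) (bv k)) ⊓ bAll (bv k) (eqF (bv (k+1)) (vl (vl a))))) ⊓
  ((bEx p ((memF (vl a) (bv k)) ⊓ (memF (vl b) (bv k)))) ⊓
  (bAll p (memF (vl a) (bv k)))))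

def applyF {k : ℕ} (s g v : Fin k) : LSet.BoundedFormula Empty k :=
  bEx s (pairF (bv k) (vl g) (vl v))

def fT1 : LSet.BoundedFormula Empty 2 :=
  bAll 0 (bEx (vl 1) ((pairF (vl (vl (bv 2))) (vl (bv 3)) (bv 4)).ex))

def fT2 : LSet.BoundedFormula Empty 2 :=
  bAll 1 ((applyF (vl (vl 0)) (vl (bv 2)) (bv 3)).ex)

def fT3 : LSet.BoundedFormula Empty 1 :=
  bAll 0 <| .all <| .all <|
    (pairF (vl (vl (bv 1))) (vl (bv 2)) (bv 3)).imp <| .all <|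
      (memF (bv 4) (vl (bv 3))).iff <|
        bEx (vl (vl (bv 2))) <|
          .ex <|
            (applyF (vl (vl (vl (vl (vl (vl 0)))))) (vl (bv 5)) (bv 6)) ⊓
            (subF (vl (vl (bv 4))) (bv 6))

def fT4 : LSet.BoundedFormula Empty 3 :=
  .all <|
    (memF (bv 3) (vl (0 : Fin 3))).iff <|
      bEx (vl (2 : Fin 3)) <|
        .ex <|
          (applyF (vl (vl (vl (1 : Fin 3)))) (vl (bv 4)) (bv 5)) ⊓
          (subF (vl (vl (bv 3))) (bv 5))

section FormulaRealize
universe v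
variable {α : Type v} [LSet.Structure α] {m : α → α → Prop}
  (hm : ∀ a b : α, FirstOrder.Language.Structure.RelMap (L := LSet) (n := 2) () ![a, b] ↔ m a b)
include hm

theorem realize_transF {k} (i : Fin k) (v : Empty → α) (xs : Fin k → α) :
    (transF i).Realize v xs ↔ ∀ a, m a (xs i) → ∀ b, m b a → m b (xs i) := by
  simp [transF, realize_bAll hm, realize_memF hm]

theorem realize_fOrd (v : Empty → α) (xs : Fin 1 → α) :
    fOrd.Realize v xs ↔ ((∀ a, m a (xs 0) → ∀ b, m b a → m b (xs 0)) ∧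
      (∀ a, m a (xs 0) → ∀ b, m b a → ∀ c, m c b → m c a)) := by
  simp [fOrd, realize_transF hm, realize_bAll hm, realize_memF hm]

theorem realize_pairF {k} (p a b : Fin k) (v : Empty → α) (xs : Fin k → α) :
    (pairF p a b).Realize v xs ↔ PairR m (xs p) (xs a) (xs b) := by
  unfold PairR
  simp [pairF, realize_bAll hm, realize_bEx hm, realize_memF hm]

theorem realize_applyF {k} (s g v : Fin k) (w : Empty → α) (xs : Fin k → α) :
    (applyF s g v).Realize w xs ↔ ApplyR m (xs s) (xs g) (xs v) := by
  unfold ApplyR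
  simp [applyF, realize_bEx hm, realize_pairF hm]

theorem realize_fT1 (w : Empty → α) (xs : Fin 2 → α) :
    fT1.Realize w xs ↔ ∀ p, m p (xs 0) → ∃ β, m β (xs 1) ∧ ∃ v, PairR m p β v := by
  simp [fT1, realize_bAll hm, realize_bEx hm, realize_pairF hm]

theorem realize_fT2 (w : Empty → α) (xs : Fin 2 → α) :
    fT2.Realize w xs ↔ ∀ β, m β (xs 1) → ∃ v, ApplyR m (xs 0) β v := by
  simp [fT2, realize_bAll hm, realize_applyF hm]

theorem realize_fT3 (w : Empty → α) (xs : Fin 1 → α) :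
    fT3.Realize w xs ↔ ∀ p, m p (xs 0) → ∀ β v, PairR m p β v →
      ∀ x, (m x v ↔ ∃ γ, m γ β ∧ ∃ v', ApplyR m (xs 0) γ v' ∧ ∀ z, m z x → m z v') := by
  simp [fT3, realize_bAll hm, realize_bEx hm, realize_pairF hm, realize_applyF hm,
    realize_memF hm, realize_subF hm]

theorem realize_fT4 (w : Empty → α) (xs : Fin 3 → α) :
    fT4.Realize w xs ↔ ∀ x, (m x (xs 0) ↔ ∃ β, m β (xs 2) ∧ ∃ v, ApplyR m (xs 1) β v ∧
      ∀ z, m z x → m z v) := by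
  simp [fT4, realize_bEx hm, realize_applyF hm, realize_memF hm, realize_subF hm]

end FormulaRealize
end Formulas
section Relativize
universe v

theorem snoc_cons {α : Type v} {k : ℕ} (w : α) (f : Fin k → α) (z : α) :
    Fin.snoc (α := fun _ => α) (Fin.cons w f) z = Fin.cons w (Fin.snoc f z) :=
  (Fin.cons_snoc_eq_snoc_cons w f z).symm

/-- shift of a term, making room for a new variable at position 0 -/
def tsh {m : ℕ} : LSet.Term (Empty ⊕ Fin m) → LSet.Term (Empty ⊕ Fin (m+1)) :=
  FirstOrder.Language.Term.relabel (Sum.map id Fin.succ)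

/-- relativization of a formula to the set denoted by a new variable at position 0 -/
def relAux : ∀ {m : ℕ}, LSet.BoundedFormula Empty m → LSet.BoundedFormula Empty (m+1)
  | _, .falsum => .falsum
  | _, .equal t₁ t₂ => .equal (tsh t₁) (tsh t₂)
  | _, .rel R ts => .rel R (fun i => tsh (ts i))
  | _, .imp φ ψ => .imp (relAux φ) (relAux ψ)
  | m, .all φ => .all ((memF (bv (m+1)) (vl 0)).imp (relAux φ))

/-- coerced value of a shifted term in an ambient structure -/
theorem tsh_val {α : Type*} [LSet.Structure α] {S : Set ZFSet.{v}} {m : ℕ}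
    (env : Fin (m+1) → α) (c : α → ZFSet.{v})
    (xs : Fin m → S) (hcompat : ∀ i : Fin m, c (env i.succ) = (xs i : ZFSet))
    (t : LSet.Term (Empty ⊕ Fin m)) :
    c (FirstOrder.Language.Term.realize (Sum.elim (fun e : Empty => e.elim) env) (tsh t))
      = ((FirstOrder.Language.Term.realize
          (Sum.elim (fun e : Empty => e.elim) xs) t : S) : ZFSet) := by
  cases t with
  | var a =>
    cases a with
    | inl e => exact e.elim
    | inr i => simpa [tsh] using hcompat i
  | func f ts => exact f.elim

theorem relAux_V {w : ZFSet.{v}} :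
    ∀ {m : ℕ} (φ : LSet.BoundedFormula Empty m) (xs : Fin m → {x : ZFSet.{v} | x ∈ w}),
    ((relAux φ).Realize (M := ZFSet.{v}) (fun e => e.elim)
      (Fin.cons w fun i => (xs i : ZFSet)) ↔
    φ.Realize (M := {x : ZFSet.{v} | x ∈ w}) (fun e => e.elim) xs) := by
  intro m φ
  induction φ with
  | falsum => intro xs; exact Iff.rfl
  | @equal m t₁ t₂ =>
    intro xs
    have h₁ := tsh_val (S := {x : ZFSet.{v} | x ∈ w}) (Fin.cons w fun i => ((xs i : ZFSet)))
      id xs (fun i => by simp) t₁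
    have h₂ := tsh_val (S := {x : ZFSet.{v} | x ∈ w}) (Fin.cons w fun i => ((xs i : ZFSet)))
      id xs (fun i => by simp) t₂
    show FirstOrder.Language.Term.realize _ (tsh t₁) = FirstOrder.Language.Term.realize _ (tsh t₂)
      ↔ FirstOrder.Language.Term.realize _ t₁ = FirstOrder.Language.Term.realize _ t₂
    simp only [id] at h₁ h₂
    rw [h₁, h₂]
    exact Subtype.coe_injective.eq_iff
  | @rel m l R ts =>
    intro xs
    match l, R with
    | 2, R =>
      have h := fun i : Fin 2 => tsh_val (S := {x : ZFSet.{v} | x ∈ w})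
        (Fin.cons w fun i => ((xs i : ZFSet))) id xs (fun i => by simp) (ts i)
      simp only [id] at h
      show FirstOrder.Language.Structure.RelMap R _ ↔ FirstOrder.Language.Structure.RelMap R _
      obtain rfl : R = () := rfl
      show (_ ∈ _) ↔ (_ ∈ _)
      simp only [h]
    | 0, R => exact R.elim
    | 1, R => exact R.elim
    | (l+3), R => exact R.elim
  | imp φ ψ ihφ ihψ =>
    intro xs
    exact imp_congr (ihφ xs) (ihψ xs)
  | @all m φ ih =>
    intro xs
    rw [show relAux (φ.all) = .all ((memF (bv (m+1)) (vl 0)).imp (relAux φ)) from rfl]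
    simp only [FirstOrder.Language.BoundedFormula.realize_all,
      FirstOrder.Language.BoundedFormula.realize_imp]
    constructor
    · intro h z
      have hz := h (z : ZFSet)
      rw [realize_memF hmV] at hz
      simp only [snoc_bv, snoc_vl, Fin.cons_zero] at hz
      rw [snoc_cons] at hz
      have h2 := hz z.2
      have hxe : (fun i => ((Fin.snoc xs z : Fin (m+1) → _) i : ZFSet))
          = Fin.snoc (fun i => (xs i : ZFSet)) (z : ZFSet) := by
        funext i
        induction i using Fin.lastCases <;> simp
      exact (ih (Fin.snoc xs z)).mp (by rw [hxe]; exact h2)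
    · intro h z
      rw [realize_memF hmV]
      simp only [snoc_bv, snoc_vl, Fin.cons_zero]
      intro hzw
      have hxe : (fun i => ((Fin.snoc xs ⟨z, hzw⟩ : Fin (m+1) → _) i : ZFSet))
          = Fin.snoc (fun i => (xs i : ZFSet)) z := by
        funext i
        induction i using Fin.lastCases <;> simp
      have h2 := (ih (Fin.snoc xs ⟨z, hzw⟩)).mpr (h ⟨z, hzw⟩)
      rw [hxe] at h2
      rw [snoc_cons]
      exact h2

theorem relAux_M {M : Set ZFSet.{v}} (hM : TransClass M) {w : ZFSet.{v}} (hw : w ∈ M) :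
    ∀ {m : ℕ} (φ : LSet.BoundedFormula Empty m) (xs : Fin m → {x : ZFSet.{v} | x ∈ w}),
    ((relAux φ).Realize (M := M) (fun e => e.elim)
      (Fin.cons ⟨w, hw⟩ (fun i => ⟨xs i, hM w hw _ (xs i).2⟩)) ↔
    φ.Realize (M := {x : ZFSet.{v} | x ∈ w}) (fun e => e.elim) xs) := by
  intro m φ
  induction φ with
  | falsum => intro xs; exact Iff.rfl
  | @equal m t₁ t₂ =>
    intro xs
    have h₁ := tsh_val (S := {x : ZFSet.{v} | x ∈ w})
      (Fin.cons (⟨w, hw⟩ : M) (fun i => ⟨xs i, hM w hw _ (xs i).2⟩)) Subtype.val xs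
      (fun i => by simp) t₁
    have h₂ := tsh_val (S := {x : ZFSet.{v} | x ∈ w})
      (Fin.cons (⟨w, hw⟩ : M) (fun i => ⟨xs i, hM w hw _ (xs i).2⟩)) Subtype.val xs
      (fun i => by simp) t₂
    show FirstOrder.Language.Term.realize _ (tsh t₁) = FirstOrder.Language.Term.realize _ (tsh t₂)
      ↔ FirstOrder.Language.Term.realize _ t₁ = FirstOrder.Language.Term.realize _ t₂
    rw [Subtype.ext_iff, Subtype.ext_iff, h₁, h₂]
  | @rel m l R ts =>
    intro xs
    match l, R with
    | 2, R =>
      have h := fun i : Fin 2 => tsh_val (S := {x : ZFSet.{v} | x ∈ w})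
        (Fin.cons (⟨w, hw⟩ : M) (fun i => ⟨xs i, hM w hw _ (xs i).2⟩)) Subtype.val xs
        (fun i => by simp) (ts i)
      show FirstOrder.Language.Structure.RelMap R _ ↔ FirstOrder.Language.Structure.RelMap R _
      obtain rfl : R = () := rfl
      show (_ ∈ _) ↔ (_ ∈ _)
      simp only [h]
    | 0, R => exact R.elim
    | 1, R => exact R.elim
    | (l+3), R => exact R.elim
  | imp φ ψ ihφ ihψ =>
    intro xs
    exact imp_congr (ihφ xs) (ihψ xs)
  | @all m φ ih =>
    intro xs
    rw [show relAux (φ.all) = .all ((memF (bv (m+1)) (vl 0)).imp (relAux φ)) from rfl]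
    simp only [FirstOrder.Language.BoundedFormula.realize_all,
      FirstOrder.Language.BoundedFormula.realize_imp]
    constructor
    · intro h z
      have hz := h ⟨(z : ZFSet), hM w hw _ z.2⟩
      rw [realize_memF (hmS M)] at hz
      simp only [snoc_bv, snoc_vl, Fin.cons_zero] at hz
      rw [snoc_cons] at hz
      have h2 := hz z.2
      have hxe : (fun i => (⟨(Fin.snoc xs z : Fin (m+1) → _) i,
            hM w hw _ ((Fin.snoc xs z : Fin (m+1) → _) i).2⟩ : M))
          = Fin.snoc (fun i => (⟨xs i, hM w hw _ (xs i).2⟩ : M))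
              ⟨(z : ZFSet), hM w hw _ z.2⟩ := by
        funext i
        induction i using Fin.lastCases
        · apply Subtype.ext; simp
        · apply Subtype.ext; simp
      exact (ih (Fin.snoc xs z)).mp (by rw [hxe]; exact h2)
    · intro h z
      rw [realize_memF (hmS M)]
      simp only [snoc_bv, snoc_vl, Fin.cons_zero]
      intro hzw
      have hzw' : (z : ZFSet) ∈ w := hzw
      have hxe : (fun i => (⟨(Fin.snoc xs ⟨(z : ZFSet), hzw'⟩ : Fin (m+1) → _) i,
            hM w hw _ ((Fin.snoc xs ⟨(z : ZFSet), hzw'⟩ : Fin (m+1) → _) i).2⟩ : M))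
          = Fin.snoc (fun i => (⟨xs i, hM w hw _ (xs i).2⟩ : M)) z := by
        funext i
        induction i using Fin.lastCases
        · apply Subtype.ext; simp
        · apply Subtype.ext; simp
      have h2 := (ih (Fin.snoc xs ⟨(z : ZFSet), hzw'⟩)).mpr (h ⟨(z : ZFSet), hzw'⟩)
      rw [hxe] at h2
      rw [snoc_cons]
      exact h2

end Relativize
section Main

noncomputable def sk (κ : ZFSet.{u}) : ZFSet.{u} :=
  @ZFSet.image (fun β => ZFSet.pair β (Vz β.rank)) (Classical.allZFSetDefinable _) κ

theorem mem_sk {κ p : ZFSet.{u}} : p ∈ sk κ ↔ ∃ β ∈ κ, ZFSet.pair β (Vz β.rank) = p :=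
  @ZFSet.mem_image _ (Classical.allZFSetDefinable _) _ _

theorem applyR_sk {κ γ v : ZFSet.{u}} (hγ : γ ∈ κ) :
    ApplyR (· ∈ ·) (sk κ) γ v ↔ v = Vz γ.rank := by
  constructor
  · rintro ⟨p, hp, hpair⟩
    obtain ⟨β₀, hβ₀, rfl⟩ := mem_sk.1 hp
    have h := pairR_iff.1 hpair
    obtain ⟨rfl, rfl⟩ := ZFSet.pair_injective h.symm
    rfl
  · rintro rfl
    exact ⟨ZFSet.pair γ (Vz γ.rank), mem_sk.2 ⟨γ, hγ, rfl⟩, pairR_iff.2 rfl⟩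

theorem exists_rank_le {x β : ZFSet.{u}} (h : x.rank < β.rank) :
    ∃ γ ∈ β, x.rank ≤ γ.rank := ZFSet.lt_rank_iff.1 h

variable {M : Set ZFSet.{u}} {j : ZFSet.{u} → ZFSet.{u}} {κ : ZFSet.{u}}

theorem j_mem (hj : ElemEmbV M j) {x y : ZFSet.{u}} : x ∈ y ↔ j x ∈ j y := by
  have h := hj.elem (memF 0 1) ![x, y]
  simp only [SatV, SatIn, realize_memF hmV, realize_memF (hmS M)] at h
  simpa using h

theorem j_subset (hM : TransClass M) (hj : ElemEmbV M j) {x y : ZFSet.{u}} (hx : x ⊆ y) :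
    j x ⊆ j y := by
  have h := hj.elem (subF 0 1) ![x, y]
  simp only [SatV, SatIn, realize_subF hmV, realize_subF (hmS M)] at h
  simp only [Matrix.cons_val_zero, Matrix.cons_val_one, Matrix.head_cons] at h
  intro z hz
  have hzM : z ∈ M := hM _ (hj.maps x) z hz
  exact h.1 (fun a ha => hx ha) ⟨z, hzM⟩ hz

theorem j_ord (hM : TransClass M) (hj : ElemEmbV M j) (h : ZFOrd κ) : ZFOrd (j κ) := by
  have htr := hj.elem fOrd ![κ]
  simp only [SatV, SatIn, realize_fOrd hmV, realize_fOrd (hmS M)] at htr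
  simp only [Matrix.cons_val_zero] at htr
  have hV0 : (∀ a, a ∈ κ → ∀ b, b ∈ a → b ∈ κ) ∧
      (∀ a, a ∈ κ → ∀ b, b ∈ a → ∀ c, c ∈ b → c ∈ a) := by
    refine ⟨fun a ha b hb => h.1 a ha hb, fun a ha b hb c hc => (h.2 a ha) b hb hc⟩
  have hMside := htr.1 hV0
  constructor
  · intro y hy z hz
    have hyM : y ∈ M := hM _ (hj.maps κ) y hy
    have hzM : z ∈ M := hM _ hyM z hz
    exact hMside.1 ⟨y, hyM⟩ hy ⟨z, hzM⟩ hz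
  · intro y hy z hz w hw
    have hyM : y ∈ M := hM _ (hj.maps κ) y hy
    have hzM : z ∈ M := hM _ hyM z hz
    have hwM : w ∈ M := hM _ hzM w hw
    exact hMside.2 ⟨y, hyM⟩ hy ⟨z, hzM⟩ hz ⟨w, hwM⟩ hw

theorem crit_mem (hM : TransClass M) (hj : ElemEmbV M j) (hc : IsCritPt j κ) : κ ∈ j κ := by
  have hsub : κ ⊆ j κ := fun α hα => by
    have := (j_mem hj).1 hα
    rwa [hc.2.1 α hα] at this
  rcases zford_tri κ (j κ) hc.1 (j_ord hM hj hc.1) with h | h | h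
  · exact h
  · exact absurd h.symm hc.2.2
  · exact absurd (hsub h) (ZFSet.mem_irrefl _)

theorem crit_rank (hM : TransClass M) (hj : ElemEmbV M j) (hc : IsCritPt j κ) :
    κ.rank < (j κ).rank := ZFSet.rank_lt_of_mem (crit_mem hM hj hc)

end Main
section Main2

variable {M : Set ZFSet.{u}} {j : ZFSet.{u} → ZFSet.{u}} {κ : ZFSet.{u}}

/-- V-side truth of fT1 -/
theorem satV_fT1 : SatV fT1 ![sk κ, κ] := by
  refine (realize_fT1 hmV _ _).mpr ?_
  simp only [Matrix.cons_val_zero, Matrix.cons_val_one, Matrix.head_cons]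
  intro p hp
  obtain ⟨β, hβ, rfl⟩ := mem_sk.1 hp
  exact ⟨β, hβ, Vz β.rank, pairR_iff.2 rfl⟩

/-- V-side truth of fT2 -/
theorem satV_fT2 : SatV fT2 ![sk κ, κ] := by
  refine (realize_fT2 hmV _ _).mpr ?_
  simp only [Matrix.cons_val_zero, Matrix.cons_val_one, Matrix.head_cons]
  intro β hβ
  exact ⟨Vz β.rank, (applyR_sk hβ).2 rfl⟩

/-- V-side truth of fT3 -/
theorem satV_fT3 (hc : IsCritPt j κ) : SatV fT3 ![sk κ] := by
  refine (realize_fT3 hmV _ _).mpr ?_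
  simp only [Matrix.cons_val_zero]
  intro p hp β v hpair x
  obtain ⟨β₀, hβ₀, rfl⟩ := mem_sk.1 hp
  obtain ⟨rfl, rfl⟩ := ZFSet.pair_injective (pairR_iff.1 hpair).symm
  rw [mem_Vz]
  constructor
  · intro hx
    obtain ⟨γ, hγβ, hle⟩ := exists_rank_le hx
    have hγκ : γ ∈ κ := hc.1.1 β hβ₀ hγβ
    exact ⟨γ, hγβ, Vz γ.rank, (applyR_sk hγκ).2 rfl,
      fun z hz => mem_Vz.2 (lt_of_lt_of_le (ZFSet.rank_lt_of_mem hz) hle)⟩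
  · rintro ⟨γ, hγβ, v', happ, hsub⟩
    have hγκ : γ ∈ κ := hc.1.1 β hβ₀ hγβ
    obtain rfl := (applyR_sk hγκ).1 happ
    have : x.rank ≤ γ.rank := ZFSet.rank_le_iff.2 fun z hz => mem_Vz.1 (hsub z hz)
    exact lt_of_le_of_lt this (ZFSet.rank_lt_of_mem hγβ)

/-- V-side truth of fT4 -/
theorem satV_fT4 : SatV fT4 ![Vz κ.rank, sk κ, κ] := by
  refine (realize_fT4 hmV _ _).mpr ?_
  simp only [Matrix.cons_val_zero, Matrix.cons_val_one, Matrix.head_cons]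
  intro x
  rw [mem_Vz]
  constructor
  · intro hx
    obtain ⟨γ, hγκ, hle⟩ := exists_rank_le hx
    exact ⟨γ, hγκ, Vz γ.rank, (applyR_sk hγκ).2 rfl,
      fun z hz => mem_Vz.2 (lt_of_lt_of_le (ZFSet.rank_lt_of_mem hz) hle)⟩
  · rintro ⟨γ, hγκ, v', happ, hsub⟩
    obtain rfl := (applyR_sk hγκ).1 happ
    have : x.rank ≤ γ.rank := ZFSet.rank_le_iff.2 fun z hz => mem_Vz.1 (hsub z hz)
    exact lt_of_le_of_lt this (ZFSet.rank_lt_of_mem hγκ)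

end Main2
section Main3

variable {M : Set ZFSet.{u}} {j : ZFSet.{u} → ZFSet.{u}} {κ : ZFSet.{u}}

theorem claimR (hM : TransClass M) (hj : ElemEmbV M j) (hc : IsCritPt j κ)
    (hV : ∀ x : ZFSet.{u}, x.rank < (j κ).rank → x ∈ M) :
    ∀ β : ZFSet.{u}, β ∈ j κ → ∀ v : ZFSet.{u}, v ∈ M →
      ApplyR (· ∈ ·) (j (sk κ)) β v → v = Vz β.rank := by
  have jord := j_ord hM hj hc.1
  have h3 := (hj.elem fT3 ![sk κ]).mp (satV_fT3 hc)
  simp only [SatIn, realize_fT3 (hmS M), Matrix.cons_val_zero] at h3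
  have h2 := (hj.elem fT2 ![sk κ, κ]).mp satV_fT2
  simp only [SatIn, realize_fT2 (hmS M), Matrix.cons_val_zero, Matrix.cons_val_one,
    Matrix.head_cons] at h2
  intro β
  induction β using ZFSet.inductionOn with
  | _ β IH =>
    intro hβjκ v hvM happ
    obtain ⟨p, hp, hpair⟩ := happ
    have hpM : p ∈ M := hM _ (hj.maps (sk κ)) p hp
    have hβM : β ∈ M := hM _ (hj.maps κ) β hβjκ
    have hmem := h3 ⟨p, hpM⟩ hp ⟨β, hβM⟩ ⟨v, hvM⟩ ((pairR_subtype hM).2 hpair)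
    apply ZFSet.ext
    intro x
    constructor
    · intro hxv
      have hxM : x ∈ M := hM v hvM x hxv
      obtain ⟨γ, hγβ, v'', happ'', hsub⟩ := (hmem ⟨x, hxM⟩).1 hxv
      have happR : ApplyR (· ∈ ·) (j (sk κ)) (γ : ZFSet) (v'' : ZFSet) :=
        (applyR_subtype hM).1 happ''
      have hγjκ : (γ : ZFSet) ∈ j κ := jord.1 β hβjκ hγβ
      have hv'' := IH (γ : ZFSet) hγβ hγjκ (v'' : ZFSet) v''.2 happR
      have hxsub : ∀ z, z ∈ x → z ∈ (v'' : ZFSet) :=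
        fun z hz => hsub ⟨z, hM x hxM z hz⟩ hz
      rw [mem_Vz]
      have hxle : x.rank ≤ (γ : ZFSet).rank := by
        refine ZFSet.rank_le_iff.2 fun z hz => ?_
        have := hxsub z hz
        rw [hv''] at this
        exact mem_Vz.1 this
      exact lt_of_le_of_lt hxle (ZFSet.rank_lt_of_mem hγβ)
    · intro hxVz
      have hrx : x.rank < β.rank := mem_Vz.1 hxVz
      have hxM : x ∈ M := hV x (lt_trans hrx (ZFSet.rank_lt_of_mem hβjκ))
      obtain ⟨γ, hγβ, hle⟩ := exists_rank_le hrx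
      have hγjκ : γ ∈ j κ := jord.1 β hβjκ hγβ
      have hγM : γ ∈ M := hM β hβM γ hγβ
      obtain ⟨v'', happ''⟩ := h2 ⟨γ, hγM⟩ hγjκ
      have happR := (applyR_subtype hM).1 happ''
      have hv'' := IH γ hγβ hγjκ (v'' : ZFSet) v''.2 happR
      refine (hmem ⟨x, hxM⟩).2 ⟨⟨γ, hγM⟩, hγβ, v'', happ'', ?_⟩
      intro z hz
      show (z : ZFSet) ∈ (v'' : ZFSet)
      rw [hv'']
      exact mem_Vz.2 (lt_of_lt_of_le (ZFSet.rank_lt_of_mem hz) hle)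

end Main3
section Main4

variable {M : Set ZFSet.{u}} {j : ZFSet.{u} → ZFSet.{u}} {κ : ZFSet.{u}}

theorem crit_sub (hj : ElemEmbV M j) (hc : IsCritPt j κ) : κ ⊆ j κ := fun α hα => by
  have := (j_mem hj).1 hα
  rwa [hc.2.1 α hα] at this

theorem j_pair (hM : TransClass M) (hj : ElemEmbV M j) {p a b : ZFSet.{u}}
    (h : p = ZFSet.pair a b) : j p = ZFSet.pair (j a) (j b) := by
  have hVt : SatV (pairF (0 : Fin 3) 1 2) ![p, a, b] := by
    refine (realize_pairF hmV 0 1 2 _ _).mpr ?_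
    simpa using pairR_iff.2 h
  have hMside := (hj.elem (pairF (0 : Fin 3) 1 2) ![p, a, b]).mp hVt
  simp only [SatIn, realize_pairF (hmS M)] at hMside
  have := (pairR_subtype hM).1 hMside
  simp only [Matrix.cons_val_zero, Matrix.cons_val_one, Matrix.head_cons] at this
  exact pairR_iff.1 this

theorem jfix_Vz (hM : TransClass M) (hj : ElemEmbV M j) (hc : IsCritPt j κ)
    (hV : ∀ x : ZFSet.{u}, x.rank < (j κ).rank → x ∈ M) {β : ZFSet.{u}} (hβ : β ∈ κ) :
    j (Vz β.rank) = Vz β.rank := by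
  have hp : ZFSet.pair β (Vz β.rank) ∈ sk κ := mem_sk.2 ⟨β, hβ, rfl⟩
  have hjp := j_pair hM hj (rfl : ZFSet.pair β (Vz β.rank) = _)
  rw [hc.2.1 β hβ] at hjp
  have happ : ApplyR (· ∈ ·) (j (sk κ)) β (j (Vz β.rank)) :=
    ⟨j (ZFSet.pair β (Vz β.rank)), (j_mem hj).1 hp, pairR_iff.2 hjp⟩
  exact claimR hM hj hc hV β (crit_sub hj hc hβ) _ (hj.maps _) happ

theorem jfix_below (hM : TransClass M) (hj : ElemEmbV M j) (hc : IsCritPt j κ)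
    (hV : ∀ x : ZFSet.{u}, x.rank < (j κ).rank → x ∈ M) :
    ∀ β : ZFSet.{u}, β ∈ κ → ∀ x : ZFSet.{u}, x.rank ≤ β.rank → j x = x := by
  intro β
  induction β using ZFSet.inductionOn with
  | _ β IH =>
    intro hβ x hx
    apply ZFSet.ext
    intro z
    constructor
    · intro hz
      have hxsub : x ⊆ Vz β.rank := subset_Vz.2 hx
      have : j x ⊆ Vz β.rank := by
        have := j_subset hM hj hxsub
        rwa [jfix_Vz hM hj hc hV hβ] at this
      have hzV := this hz
      have hrz : z.rank < β.rank := mem_Vz.1 hzV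
      obtain ⟨γ, hγβ, hle⟩ := exists_rank_le hrz
      have hjz : j z = z := IH γ hγβ (hc.1.1 β hβ hγβ) z hle
      rw [← hjz] at hz
      exact (j_mem hj).2 hz
    · intro hz
      have hrz : z.rank < β.rank := lt_of_lt_of_le (ZFSet.rank_lt_of_mem hz) hx
      obtain ⟨γ, hγβ, hle⟩ := exists_rank_le hrz
      have hjz : j z = z := IH γ hγβ (hc.1.1 β hβ hγβ) z hle
      rw [← hjz]
      exact (j_mem hj).1 hz

theorem jfix_lt (hM : TransClass M) (hj : ElemEmbV M j) (hc : IsCritPt j κ)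
    (hV : ∀ x : ZFSet.{u}, x.rank < (j κ).rank → x ∈ M) {x : ZFSet.{u}}
    (hx : x.rank < κ.rank) : j x = x := by
  obtain ⟨β, hβ, hle⟩ := exists_rank_le hx
  exact jfix_below hM hj hc hV β hβ x hle

theorem jVz_char (hM : TransClass M) (hj : ElemEmbV M j) (hc : IsCritPt j κ)
    (hV : ∀ x : ZFSet.{u}, x.rank < (j κ).rank → x ∈ M) :
    ∀ x : ZFSet.{u}, x ∈ j (Vz κ.rank) ↔ x.rank < (j κ).rank := by
  have jord := j_ord hM hj hc.1
  have h4 := (hj.elem fT4 ![Vz κ.rank, sk κ, κ]).mp satV_fT4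
  simp only [SatIn, realize_fT4 (hmS M), Matrix.cons_val_zero, Matrix.cons_val_one,
    Matrix.head_cons, Matrix.cons_val_two, Matrix.tail_cons] at h4
  have h2 := (hj.elem fT2 ![sk κ, κ]).mp satV_fT2
  simp only [SatIn, realize_fT2 (hmS M), Matrix.cons_val_zero, Matrix.cons_val_one,
    Matrix.head_cons] at h2
  intro x
  constructor
  · intro hx
    have hxM : x ∈ M := hM _ (hj.maps (Vz κ.rank)) x hx
    obtain ⟨β, hβjκ, v, happ, hsub⟩ := (h4 ⟨x, hxM⟩).1 hx
    have happR := (applyR_subtype hM).1 happ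
    have hv := claimR hM hj hc hV (β : ZFSet) hβjκ (v : ZFSet) v.2 happR
    have hxle : x.rank ≤ (β : ZFSet).rank := by
      refine ZFSet.rank_le_iff.2 fun z hz => ?_
      have hzv := hsub ⟨z, hM x hxM z hz⟩ hz
      have hzv' : z ∈ Vz (β : ZFSet).rank := by rwa [hv] at hzv
      exact mem_Vz.1 hzv'
    exact lt_of_le_of_lt hxle (ZFSet.rank_lt_of_mem hβjκ)
  · intro hx
    have hxM : x ∈ M := hV x hx
    obtain ⟨β, hβjκ, hle⟩ := exists_rank_le hx
    have hβM : β ∈ M := hM _ (hj.maps κ) β hβjκ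
    obtain ⟨v, happ⟩ := h2 ⟨β, hβM⟩ hβjκ
    have happR := (applyR_subtype hM).1 happ
    have hv := claimR hM hj hc hV β hβjκ (v : ZFSet) v.2 happR
    refine (h4 ⟨x, hxM⟩).2 ⟨⟨β, hβM⟩, hβjκ, v, happ, ?_⟩
    intro z hz
    show (z : ZFSet) ∈ (v : ZFSet)
    rw [hv]
    exact mem_Vz.2 (lt_of_lt_of_le (ZFSet.rank_lt_of_mem hz) hle)

end Main4
section Final

theorem satIn_congr {S T : Set ZFSet.{u}} (h : S = T) {k : ℕ}
    (φ : LSet.BoundedFormula Empty k) (xs : Fin k → S) :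
    SatIn S φ xs ↔ SatIn T φ (fun i => ⟨xs i, h ▸ (xs i).2⟩) := by
  subst h
  exact Iff.rfl

variable {M : Set ZFSet.{u}} {j : ZFSet.{u} → ZFSet.{u}} {κ : ZFSet.{u}}

theorem elem_chain (hM : TransClass M) (hj : ElemEmbV M j) (hc : IsCritPt j κ)
    (hV : ∀ x : ZFSet.{u}, x.rank < (j κ).rank → x ∈ M) {k : ℕ}
    (φ : LSet.BoundedFormula Empty k) (xs : Fin k → ↥(Vset κ.rank)) :
    SatIn (Vset κ.rank) φ xs ↔ SatIn (Vset (j κ).rank) φ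
      (fun i => ⟨xs i, lt_trans (xs i).2 (crit_rank hM hj hc)⟩) := by
  have hEq1 : Vset κ.rank = {x : ZFSet.{u} | x ∈ Vz κ.rank} :=
    Set.ext fun x => mem_Vz.symm
  have hEq2 : {x : ZFSet.{u} | x ∈ j (Vz κ.rank)} = Vset (j κ).rank :=
    Set.ext fun x => jVz_char hM hj hc hV x
  -- move parameters into the subtype of `Vz κ.rank`
  set xs₁ : Fin k → {x : ZFSet.{u} | x ∈ Vz κ.rank} :=
    fun i => ⟨xs i, hEq1 ▸ (xs i).2⟩ with hxs₁
  have step1 : SatIn (Vset κ.rank) φ xs ↔ SatIn {x : ZFSet.{u} | x ∈ Vz κ.rank} φ xs₁ :=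
    satIn_congr hEq1 φ xs
  have step2 := (relAux_V (w := Vz κ.rank) φ xs₁).symm
  have step3 := hj.elem (relAux φ) (Fin.cons (Vz κ.rank) (fun i => (xs₁ i : ZFSet)))
  -- identify the image parameters
  set xs₂ : Fin k → {x : ZFSet.{u} | x ∈ j (Vz κ.rank)} :=
    fun i => ⟨xs i, by
      have : (xs i : ZFSet).rank < (j κ).rank := lt_trans (xs i).2 (crit_rank hM hj hc)
      exact (jVz_char hM hj hc hV _).2 this⟩ with hxs₂
  have henv : (fun i => (⟨j (Fin.cons (α := fun _ => ZFSet.{u}) (Vz κ.rank)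
        (fun i' => (xs₁ i' : ZFSet)) i), hj.maps _⟩ : M))
      = Fin.cons (⟨j (Vz κ.rank), hj.maps _⟩ : M)
          (fun i => ⟨xs₂ i, hM _ (hj.maps (Vz κ.rank)) _ (xs₂ i).2⟩) := by
    funext i
    induction i using Fin.cases with
    | zero => apply Subtype.ext; simp
    | succ i' =>
      apply Subtype.ext
      simp only [Fin.cons_succ]
      exact jfix_lt hM hj hc hV (xs i').2
  rw [henv] at step3
  have step4 := relAux_M hM (hj.maps (Vz κ.rank)) φ xs₂
  have step5 := satIn_congr hEq2 φ xs₂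
  calc SatIn (Vset κ.rank) φ xs
      ↔ SatIn {x : ZFSet.{u} | x ∈ Vz κ.rank} φ xs₁ := step1
    _ ↔ (relAux φ).Realize (M := ZFSet.{u}) (fun e => e.elim)
          (Fin.cons (Vz κ.rank) (fun i => (xs₁ i : ZFSet))) := step2
    _ ↔ SatIn M (relAux φ)
          (Fin.cons (⟨j (Vz κ.rank), hj.maps _⟩ : M)
            (fun i => ⟨xs₂ i, hM _ (hj.maps (Vz κ.rank)) _ (xs₂ i).2⟩)) := step3
    _ ↔ SatIn {x : ZFSet.{u} | x ∈ j (Vz κ.rank)} φ xs₂ := step4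
    _ ↔ SatIn (Vset (j κ).rank) φ (fun i => ⟨xs₂ i, hEq2 ▸ (xs₂ i).2⟩) := step5
    _ ↔ SatIn (Vset (j κ).rank) φ
          (fun i => ⟨xs i, lt_trans (xs i).2 (crit_rank hM hj hc)⟩) := Iff.rfl

end Final

/-- Every `C⁽ⁿ⁾`-superstrong cardinal belongs to `C⁽ⁿ⁾`. -/
theorem stmt10 (n : ℕ) (κ : ZFSet) (h : CnSuperstrong n κ) :
    κ.rank ∈ Cclass n := by
  obtain ⟨M, j, hM, hj, hc, hV, hCn⟩ := h
  have hCn' : SigmaElementary n (Vset (j κ).rank) := hCn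
  intro k φ hφ xs
  rw [elem_chain hM hj hc hV φ xs]
  exact hCn' φ hφ _
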